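/- Fix θ ∈ (ℝᵈ)ⁿ and define ψ_θ(x) = exp(θ · x) for x ∈ (ℤᵈ)ⁿ, where · is the inner product. Let p : ℤᵈ → [0,1] be a finite-range symmetric probability (p(z) = p(−z), Σ p(z) = 1, p supported in a ball of radius R). For the stirring generator (L_n f)(x) = Σ_{bonds {u,v}} p(v−u)·[f(σ^{u,v} x) − f(x)] acting on configurations x of n distinct points, where σ^{u,v} exchanges the occupants of sites u and v, there exists a₀ < ∞ depending only on p such that (L_n ψ_θ)(x)/ψ_θ(x) ≤ a₀·Σ_{j=1}^{d} Σ_{i=1}^{n} (cosh(a₀·θ_{i,j}) − 1) for all configurations x. -/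

import Mathlib

open Pointwise Finset

/-- The stirring (exchange) map: occupants of sites `u` and `v` are swapped. -/
def swapConf {n d : ℕ} (x : Fin n → Fin d → ℤ) (u v : Fin d → ℤ) :
    Fin n → Fin d → ℤ :=
  fun i => if x i = u then v else if x i = v then u else x i

/-- The exponential function `ψ_θ(x) = exp(θ · x)`. -/
noncomputable def psiExp {n d : ℕ} (θ : Fin n → Fin d → ℝ)
    (x : Fin n → Fin d → ℤ) : ℝ :=
  Real.exp (∑ i, ∑ j, θ i j * (x i j : ℝ))

theorem generator_on_exponential (d : ℕ) (p : (Fin d → ℤ) → ℝ)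
    (hp0 : ∀ z, 0 ≤ p z) (hpsym : ∀ z, p (-z) = p z)
    (hpfin : (Function.support p).Finite) (hpsum : HasSum p 1) :
    ∃ a₀ : ℝ, ∀ (n : ℕ) (θ : Fin n → Fin d → ℝ)
      (x : Fin n → Fin d → ℤ), Function.Injective x →
      (1 / 2) * ∑' (u : Fin d → ℤ), ∑' (v : Fin d → ℤ),
          p (v - u) * (psiExp θ (swapConf x u v) - psiExp θ x)
        ≤ psiExp θ x *
            (a₀ * ∑ j, ∑ i, (Real.cosh (a₀ * θ i j) - 1)) := by
  classical
  set S : Finset (Fin d → ℤ) := hpfin.toFinset with hSdef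
  have hmemS : ∀ z, z ∈ S ↔ p z ≠ 0 := fun z => hpfin.mem_toFinset
  set R : ℝ := ∑ z ∈ S, ∑ j, |((z j : ℤ) : ℝ)| with hRdef
  have hR0 : 0 ≤ R :=
    Finset.sum_nonneg fun z _ => Finset.sum_nonneg fun j _ => abs_nonneg _
  have hRz : ∀ z ∈ S, ∀ j, |((z j : ℤ) : ℝ)| ≤ R := by
    intro z hz j
    calc |((z j : ℤ) : ℝ)| ≤ ∑ j, |((z j : ℤ) : ℝ)| :=
          Finset.single_le_sum (f := fun j => |((z j : ℤ) : ℝ)|)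
            (fun j _ => abs_nonneg _) (Finset.mem_univ j)
      _ ≤ R := Finset.single_le_sum
          (f := fun z => ∑ j, |((z j : ℤ) : ℝ)|)
          (fun z _ => Finset.sum_nonneg fun j _ => abs_nonneg _) hz
  refine ⟨2 + 2 * d * R, ?_⟩
  intro n θ x hinj
  set a₀ : ℝ := 2 + 2 * d * R with ha₀def
  have ha2 : (2 : ℝ) ≤ a₀ := by
    have : (0:ℝ) ≤ 2 * d * R := by positivity
    linarith
  have haR : 2 * (d : ℝ) * R ≤ a₀ := by linarith
  have ha0 : (0 : ℝ) ≤ a₀ := by linarith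
  have hψpos : 0 < psiExp θ x := Real.exp_pos _
  set A : Finset (Fin d → ℤ) := Finset.image x Finset.univ with hAdef
  have hxA : ∀ i, x i ∈ A := fun i => Finset.mem_image_of_mem x (Finset.mem_univ i)
  set C : Finset (Fin d → ℤ) := (A ∪ (A + S)) ∪ (A - S) with hCdef
  have hxC : ∀ i, x i ∈ C := fun i =>
    Finset.mem_union_left _ (Finset.mem_union_left _ (hxA i))
  have haddC : ∀ i, ∀ s ∈ S, x i + s ∈ C := fun i s hs =>
    Finset.mem_union_left _ (Finset.mem_union_right _ (Finset.add_mem_add (hxA i) hs))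
  have hsubC : ∀ i, ∀ s ∈ S, x i - s ∈ C := fun i s hs =>
    Finset.mem_union_right _ (Finset.sub_mem_sub (hxA i) hs)
  set D : (Fin d → ℤ) → (Fin d → ℤ) → ℝ := fun u v =>
    ∑ i, ∑ j, θ i j * (((swapConf x u v i j : ℤ) : ℝ) - ((x i j : ℤ) : ℝ)) with hDdef
  set F : (Fin d → ℤ) → (Fin d → ℤ) → ℝ := fun u v =>
    p (v - u) * (psiExp θ (swapConf x u v) - psiExp θ x) with hFdef
  -- ψ-factorization
  have hswap_exp : ∀ u v, psiExp θ (swapConf x u v) = psiExp θ x * Real.exp (D u v) := by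
    intro u v
    unfold psiExp
    rw [← Real.exp_add]
    congr 1
    rw [← Finset.sum_add_distrib]
    refine Finset.sum_congr rfl fun i _ => ?_
    rw [← Finset.sum_add_distrib]
    refine Finset.sum_congr rfl fun j _ => ?_
    ring
  have hFψ : ∀ u v, F u v = psiExp θ x * (p (v - u) * (Real.exp (D u v) - 1)) := by
    intro u v
    rw [hFdef]
    simp only []
    rw [hswap_exp u v]
    ring
  -- support of F
  have hsupp : ∀ u v, F u v ≠ 0 → u ∈ C ∧ v ∈ C := by
    intro u v h
    have hp : v - u ∈ S := by
      rw [hmemS]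
      intro h0
      exact h (by rw [hFdef]; simp [h0])
    have hsw : swapConf x u v ≠ x := by
      intro h0
      exact h (by rw [hFdef]; simp [h0])
    obtain ⟨i, hi⟩ := Function.ne_iff.mp hsw
    by_cases h1 : x i = u
    · refine ⟨h1 ▸ hxC i, ?_⟩
      have hv : v = x i + (v - u) := by rw [h1]; abel
      rw [hv]; exact haddC i _ hp
    · by_cases h2 : x i = v
      · refine ⟨?_, h2 ▸ hxC i⟩
        have hu : u = x i - (v - u) := by rw [h2]; abel
        rw [hu]; exact hsubC i _ hp
      · exact absurd (by simp [swapConf, h1, h2]) hi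
  -- tsum reduction
  have htsum : (∑' (u : Fin d → ℤ), ∑' (v : Fin d → ℤ),
      p (v - u) * (psiExp θ (swapConf x u v) - psiExp θ x))
      = ∑ u ∈ C, ∑ v ∈ C, F u v := by
    have h1 : ∀ u : Fin d → ℤ, (∑' v, F u v) = ∑ v ∈ C, F u v := fun u =>
      tsum_eq_sum (fun v hv => by
        by_contra h0
        exact hv (hsupp u v h0).2)
    calc (∑' u, ∑' v, F u v) = ∑' u, ∑ v ∈ C, F u v := tsum_congr h1
      _ = ∑ u ∈ C, ∑ v ∈ C, F u v := tsum_eq_sum (fun u hu =>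
          Finset.sum_eq_zero fun v _ => by
            by_contra h0
            exact hu (hsupp u v h0).1)
  -- the linear part vanishes
  set g : Fin n → (Fin d → ℤ) → ℝ := fun i w => p w * ∑ j, θ i j * ((w j : ℤ) : ℝ) with hgdef
  have hg0 : ∀ i, g i 0 = 0 := by intro i; simp [hgdef]
  have hgS : ∀ i w, w ∉ S → g i w = 0 := by
    intro i w hw
    have : p w = 0 := by
      by_contra h0
      exact hw ((hmemS w).mpr h0)
    simp [hgdef, this]
  have hterm : ∀ (i : Fin n) (u v : Fin d → ℤ),
      p (v - u) * (∑ j, θ i j * (((swapConf x u v i j : ℤ) : ℝ) - ((x i j : ℤ) : ℝ)))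
      = (if x i = u then g i (v - x i) else 0) - (if x i = v then g i (x i - u) else 0) := by
    intro i u v
    by_cases h1 : x i = u
    · have hs : swapConf x u v i = v := by simp [swapConf, h1]
      rw [hs, if_pos h1, ← h1]
      by_cases h2 : x i = v
      · rw [if_pos h2, ← h2]
        simp [hgdef]
      · rw [if_neg h2]
        simp only [hgdef, Pi.sub_apply, sub_zero]
        push_cast
        ring
    · by_cases h2 : x i = v
      · have hs : swapConf x u v i = u := by simp [swapConf, h1, h2]
        rw [hs, if_neg h1, if_pos h2, ← h2]
        simp only [hgdef, Pi.sub_apply, zero_sub]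
        push_cast
        rw [Finset.mul_sum, Finset.mul_sum, ← Finset.sum_neg_distrib]
        exact Finset.sum_congr rfl fun j _ => by ring
      · have hs : swapConf x u v i = x i := by simp [swapConf, h1, h2]
        rw [hs, if_neg h1, if_neg h2]
        simp
  have hre1 : ∀ i, ∑ v ∈ C, g i (v - x i) = ∑ w ∈ S, g i w := by
    intro i
    have himg : ∑ v ∈ C, g i (v - x i) = ∑ w ∈ C.image (fun v => v - x i), g i w :=
      (Finset.sum_image (fun a _ b _ h => by
        have := congrArg (· + x i) h
        simpa using this)).symm
    rw [himg]
    refine (Finset.sum_subset ?_ ?_).symm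
    · intro w hw
      exact Finset.mem_image.mpr ⟨x i + w, haddC i w hw, by abel⟩
    · intro w _ hw
      exact hgS i w hw
  have hre2 : ∀ i, ∑ u ∈ C, g i (x i - u) = ∑ w ∈ S, g i w := by
    intro i
    have himg : ∑ u ∈ C, g i (x i - u) = ∑ w ∈ C.image (fun u => x i - u), g i w :=
      (Finset.sum_image (fun a _ b _ h => by
        exact sub_right_injective h)).symm
    rw [himg]
    refine (Finset.sum_subset ?_ ?_).symm
    · intro w hw
      exact Finset.mem_image.mpr ⟨x i - w, hsubC i w hw, by abel⟩
    · intro w _ hw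
      exact hgS i w hw
  have hlin : ∑ u ∈ C, ∑ v ∈ C, p (v - u) * D u v = 0 := by
    have step1 : ∀ u v, p (v - u) * D u v
        = ∑ i, ((if x i = u then g i (v - x i) else 0) - (if x i = v then g i (x i - u) else 0)) := by
      intro u v
      rw [hDdef]
      simp only []
      rw [Finset.mul_sum]
      exact Finset.sum_congr rfl fun i _ => hterm i u v
    calc ∑ u ∈ C, ∑ v ∈ C, p (v - u) * D u v
        = ∑ u ∈ C, ∑ v ∈ C, ∑ i, ((if x i = u then g i (v - x i) else 0)
            - (if x i = v then g i (x i - u) else 0)) := by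
          exact Finset.sum_congr rfl fun u _ => Finset.sum_congr rfl fun v _ => step1 u v
      _ = ∑ i, ∑ u ∈ C, ∑ v ∈ C, ((if x i = u then g i (v - x i) else 0)
            - (if x i = v then g i (x i - u) else 0)) := by
          exact (Finset.sum_congr rfl fun u _ => Finset.sum_comm).trans Finset.sum_comm
      _ = 0 := by
        refine Finset.sum_eq_zero fun i _ => ?_
        have e1 : ∑ u ∈ C, ∑ v ∈ C, (if x i = u then g i (v - x i) else 0)
            = ∑ v ∈ C, g i (v - x i) := by
          have : ∀ u, ∑ v ∈ C, (if x i = u then g i (v - x i) else 0)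
              = (if x i = u then ∑ v ∈ C, g i (v - x i) else 0) := by
            intro u; split_ifs <;> simp
          rw [Finset.sum_congr rfl fun u _ => this u, Finset.sum_ite_eq, if_pos (hxC i)]
        have e2 : ∑ u ∈ C, ∑ v ∈ C, (if x i = v then g i (x i - u) else 0)
            = ∑ u ∈ C, g i (x i - u) := by
          refine Finset.sum_congr rfl fun u _ => ?_
          rw [Finset.sum_ite_eq, if_pos (hxC i)]
        calc ∑ u ∈ C, ∑ v ∈ C, ((if x i = u then g i (v - x i) else 0)
              - (if x i = v then g i (x i - u) else 0))
            = ∑ u ∈ C, ((∑ v ∈ C, (if x i = u then g i (v - x i) else 0))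
              - ∑ v ∈ C, (if x i = v then g i (x i - u) else 0)) :=
              Finset.sum_congr rfl fun u _ => Finset.sum_sub_distrib _ _
          _ = (∑ u ∈ C, ∑ v ∈ C, (if x i = u then g i (v - x i) else 0))
              - ∑ u ∈ C, ∑ v ∈ C, (if x i = v then g i (x i - u) else 0) :=
              Finset.sum_sub_distrib _ _
          _ = 0 := by rw [e1, e2, hre1, hre2, sub_self]
  -- cosh bound per term
  set W : Fin n → ℝ := fun i => ∑ j, (Real.cosh (a₀ * θ i j) - 1) with hWdef
  have hc0 : ∀ i j, (0:ℝ) ≤ Real.cosh (a₀ * θ i j) - 1 := fun i j => by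
    have := Real.one_le_cosh (a₀ * θ i j); linarith
  have hW0 : ∀ i, 0 ≤ W i := fun i => Finset.sum_nonneg fun j _ => hc0 i j
  have hcoshD : ∀ u v, p (v - u) * (Real.cosh (D u v) - 1) ≤
      ∑ i, (if x i = u ∨ x i = v then p (v - u) * W i else 0) := by
    intro u v
    have hRHS0 : (0:ℝ) ≤ ∑ i, (if x i = u ∨ x i = v then p (v - u) * W i else 0) :=
      Finset.sum_nonneg fun i _ => by
        split_ifs
        · exact mul_nonneg (hp0 _) (hW0 i)
        · exact le_refl 0
    rcases eq_or_ne (p (v - u)) 0 with h0 | h0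
    · have hL : p (v - u) * (Real.cosh (D u v) - 1) = 0 := by rw [h0, zero_mul]
      rw [hL]; exact hRHS0
    rcases eq_or_ne (D u v) 0 with hD0 | hD0
    · rw [hD0, Real.cosh_zero, sub_self, mul_zero]; exact hRHS0
    have hzS : v - u ∈ S := (hmemS _).mpr h0
    set I : Finset (Fin n) := Finset.univ.filter (fun i => x i = u ∨ x i = v) with hIdef
    have hDI : D u v = ∑ i ∈ I, ∑ j, θ i j * (((swapConf x u v i j : ℤ) : ℝ) - ((x i j : ℤ) : ℝ)) := by
      rw [hDdef]
      refine (Finset.sum_subset (Finset.subset_univ I) ?_).symm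
      intro i _ hi
      have hni : ¬(x i = u ∨ x i = v) := by
        intro h; exact hi (Finset.mem_filter.mpr ⟨Finset.mem_univ i, h⟩)
      push_neg at hni
      have : swapConf x u v i = x i := by simp [swapConf, hni.1, hni.2]
      rw [this]
      simp
    have hIne : I.Nonempty := by
      by_contra hne
      rw [Finset.not_nonempty_iff_eq_empty] at hne
      exact hD0 (by rw [hDI, hne, Finset.sum_empty])
    have hdpos : 0 < d := by
      rcases Nat.eq_zero_or_pos d with hd | hd
      · exfalso
        haveI : IsEmpty (Fin d) := ⟨fun j => absurd j.2 (by omega)⟩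
        exact hD0 (by rw [hDdef]; simp)
      · exact hd
    haveI : Nonempty (Fin d) := ⟨⟨0, hdpos⟩⟩
    obtain ⟨q, hq, hmax⟩ := Finset.exists_max_image (I ×ˢ Finset.univ)
      (fun q => |θ q.1 q.2|) (hIne.product Finset.univ_nonempty)
    obtain ⟨i₀, j₀⟩ := q
    have hi₀ : i₀ ∈ I := (Finset.mem_product.mp hq).1
    have hI2 : I.card ≤ 2 := by
      have hsub : I ⊆ Finset.univ.filter (fun i => x i = u) ∪ Finset.univ.filter (fun i => x i = v) := by
        intro i hi
        rw [hIdef, Finset.mem_filter] at hi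
        rcases hi.2 with h | h
        · exact Finset.mem_union_left _ (Finset.mem_filter.mpr ⟨Finset.mem_univ i, h⟩)
        · exact Finset.mem_union_right _ (Finset.mem_filter.mpr ⟨Finset.mem_univ i, h⟩)
      have h1 : (Finset.univ.filter (fun i => x i = u)).card ≤ 1 :=
        Finset.card_le_one.mpr fun a ha b hb => hinj
          (((Finset.mem_filter.mp ha).2).trans ((Finset.mem_filter.mp hb).2).symm)
      have h2 : (Finset.univ.filter (fun i => x i = v)).card ≤ 1 :=
        Finset.card_le_one.mpr fun a ha b hb => hinj
          (((Finset.mem_filter.mp ha).2).trans ((Finset.mem_filter.mp hb).2).symm)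
      calc I.card ≤ _ := Finset.card_le_card hsub
        _ ≤ _ := Finset.card_union_le _ _
        _ ≤ 2 := by omega
    -- per-entry bound on the displacement
    have hΔ : ∀ i ∈ I, ∀ j, |((swapConf x u v i j : ℤ) : ℝ) - ((x i j : ℤ) : ℝ)| ≤ R := by
      intro i hi j
      rw [hIdef, Finset.mem_filter] at hi
      rcases hi.2 with h | h
      · have hs : swapConf x u v i = v := by simp [swapConf, h]
        rw [hs, h]
        have : ((v j : ℤ) : ℝ) - ((u j : ℤ) : ℝ) = (((v - u) j : ℤ) : ℝ) := by
          simp [Pi.sub_apply]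
        rw [this]
        exact hRz _ hzS j
      · by_cases h1 : x i = u
        · have hs : swapConf x u v i = v := by simp [swapConf, h1]
          rw [hs, h1]
          have : ((v j : ℤ) : ℝ) - ((u j : ℤ) : ℝ) = (((v - u) j : ℤ) : ℝ) := by
            simp [Pi.sub_apply]
          rw [this]
          exact hRz _ hzS j
        · have hs : swapConf x u v i = u := by simp [swapConf, h1, h]
          rw [hs, h]
          have : ((u j : ℤ) : ℝ) - ((v j : ℤ) : ℝ) = -(((v - u) j : ℤ) : ℝ) := by
            push_cast [Pi.sub_apply]; ring
          rw [this, abs_neg]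
          exact hRz _ hzS j
    have habs : |D u v| ≤ 2 * d * R * |θ i₀ j₀| := by
      rw [hDI]
      calc |∑ i ∈ I, ∑ j, θ i j * (((swapConf x u v i j : ℤ) : ℝ) - ((x i j : ℤ) : ℝ))|
          ≤ ∑ i ∈ I, |∑ j, θ i j * (((swapConf x u v i j : ℤ) : ℝ) - ((x i j : ℤ) : ℝ))| :=
            Finset.abs_sum_le_sum_abs _ _
        _ ≤ ∑ i ∈ I, ∑ j, |θ i j * (((swapConf x u v i j : ℤ) : ℝ) - ((x i j : ℤ) : ℝ))| :=
            Finset.sum_le_sum fun i _ => Finset.abs_sum_le_sum_abs _ _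
        _ ≤ ∑ i ∈ I, ∑ j, |θ i₀ j₀| * R := by
            refine Finset.sum_le_sum fun i hi => Finset.sum_le_sum fun j _ => ?_
            rw [abs_mul]
            have h1 : |θ i j| ≤ |θ i₀ j₀| := hmax (i, j) (Finset.mem_product.mpr ⟨hi, Finset.mem_univ j⟩)
            exact mul_le_mul h1 (hΔ i hi j) (abs_nonneg _) (abs_nonneg _)
        _ = (I.card : ℝ) * ((d : ℝ) * (|θ i₀ j₀| * R)) := by
            simp [Finset.sum_const, Finset.card_univ, mul_assoc]
        _ ≤ 2 * ((d : ℝ) * (|θ i₀ j₀| * R)) := by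
            have hcard : (I.card : ℝ) ≤ 2 := by exact_mod_cast hI2
            have hnn : (0:ℝ) ≤ (d : ℝ) * (|θ i₀ j₀| * R) := by positivity
            exact mul_le_mul_of_nonneg_right hcard hnn
        _ = 2 * d * R * |θ i₀ j₀| := by ring
    have hDa : |D u v| ≤ |a₀ * θ i₀ j₀| := by
      rw [abs_mul, abs_of_nonneg ha0]
      calc |D u v| ≤ 2 * d * R * |θ i₀ j₀| := habs
        _ ≤ a₀ * |θ i₀ j₀| := mul_le_mul_of_nonneg_right haR (abs_nonneg _)
    have hcle : Real.cosh (D u v) ≤ Real.cosh (a₀ * θ i₀ j₀) := Real.cosh_le_cosh.mpr hDa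
    have hstep : p (v - u) * (Real.cosh (D u v) - 1) ≤ p (v - u) * W i₀ := by
      refine mul_le_mul_of_nonneg_left ?_ (hp0 _)
      calc Real.cosh (D u v) - 1 ≤ Real.cosh (a₀ * θ i₀ j₀) - 1 := by linarith
        _ ≤ W i₀ := Finset.single_le_sum (f := fun j => Real.cosh (a₀ * θ i₀ j) - 1)
            (fun j _ => hc0 i₀ j) (Finset.mem_univ j₀)
    calc p (v - u) * (Real.cosh (D u v) - 1) ≤ p (v - u) * W i₀ := hstep
      _ = (if x i₀ = u ∨ x i₀ = v then p (v - u) * W i₀ else 0) := by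
          rw [if_pos (Finset.mem_filter.mp hi₀).2]
      _ ≤ ∑ i, (if x i = u ∨ x i = v then p (v - u) * W i else 0) :=
          Finset.single_le_sum (f := fun i => if x i = u ∨ x i = v then p (v - u) * W i else 0)
            (fun i _ => by
              split_ifs
              · exact mul_nonneg (hp0 _) (hW0 i)
              · exact le_refl 0) (Finset.mem_univ i₀)
  -- counting: total p-mass seen by each particle is at most 2
  have hsum_le1 : ∀ a : Fin d → ℤ, ∑ v ∈ C, p (v - a) ≤ 1 := by
    intro a
    have himg : ∑ v ∈ C, p (v - a) = ∑ w ∈ C.image (fun v => v - a), p w :=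
      (Finset.sum_image (fun b _ c _ h => by
        have := congrArg (· + a) h
        simpa using this)).symm
    rw [himg]
    exact sum_le_hasSum _ (fun w _ => hp0 w) hpsum
  have hsum_le2 : ∀ a : Fin d → ℤ, ∑ u ∈ C, p (a - u) ≤ 1 := by
    intro a
    have himg : ∑ u ∈ C, p (a - u) = ∑ w ∈ C.image (fun u => a - u), p w :=
      (Finset.sum_image (fun b _ c _ h => sub_right_injective h)).symm
    rw [himg]
    exact sum_le_hasSum _ (fun w _ => hp0 w) hpsum
  have hcount : ∑ u ∈ C, ∑ v ∈ C, ∑ i, (if x i = u ∨ x i = v then p (v - u) * W i else 0)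
      ≤ 2 * ∑ i, W i := by
    have hswap : ∑ u ∈ C, ∑ v ∈ C, ∑ i, (if x i = u ∨ x i = v then p (v - u) * W i else 0)
        = ∑ i, ∑ u ∈ C, ∑ v ∈ C, (if x i = u ∨ x i = v then p (v - u) * W i else 0) :=
      (Finset.sum_congr rfl fun u _ => Finset.sum_comm).trans Finset.sum_comm
    rw [hswap, Finset.mul_sum]
    refine Finset.sum_le_sum fun i _ => ?_
    have hsplit : ∀ u v : Fin d → ℤ, (if x i = u ∨ x i = v then p (v - u) * W i else 0)
        ≤ (if x i = u then p (v - u) * W i else 0) + (if x i = v then p (v - u) * W i else 0) := by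
      intro u v
      have hnn : 0 ≤ p (v - u) * W i := mul_nonneg (hp0 _) (hW0 i)
      by_cases h1 : x i = u
      · by_cases h2 : x i = v
        · rw [if_pos (Or.inl h1), if_pos h1, if_pos h2]; linarith
        · rw [if_pos (Or.inl h1), if_pos h1, if_neg h2]; linarith
      · by_cases h2 : x i = v
        · rw [if_pos (Or.inr h2), if_neg h1, if_pos h2]; linarith
        · rw [if_neg (by tauto : ¬(x i = u ∨ x i = v)), if_neg h1, if_neg h2]; linarith
    calc ∑ u ∈ C, ∑ v ∈ C, (if x i = u ∨ x i = v then p (v - u) * W i else 0)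
        ≤ ∑ u ∈ C, ∑ v ∈ C, ((if x i = u then p (v - u) * W i else 0)
            + (if x i = v then p (v - u) * W i else 0)) :=
          Finset.sum_le_sum fun u _ => Finset.sum_le_sum fun v _ => hsplit u v
      _ = (∑ u ∈ C, ∑ v ∈ C, (if x i = u then p (v - u) * W i else 0))
          + ∑ u ∈ C, ∑ v ∈ C, (if x i = v then p (v - u) * W i else 0) :=
          (Finset.sum_congr rfl fun u _ => Finset.sum_add_distrib).trans Finset.sum_add_distrib
      _ ≤ 1 * W i + 1 * W i := by
          refine add_le_add ?_ ?_
          · have e1 : ∑ u ∈ C, ∑ v ∈ C, (if x i = u then p (v - u) * W i else 0)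
                = ∑ v ∈ C, p (v - x i) * W i := by
              have hin : ∀ u : Fin d → ℤ, ∑ v ∈ C, (if x i = u then p (v - u) * W i else 0)
                  = (if x i = u then ∑ v ∈ C, p (v - u) * W i else 0) := by
                intro u; split_ifs <;> simp
              rw [Finset.sum_congr rfl fun u _ => hin u, Finset.sum_ite_eq, if_pos (hxC i)]
            rw [e1, ← Finset.sum_mul]
            exact mul_le_mul_of_nonneg_right (hsum_le1 (x i)) (hW0 i)
          · have e2 : ∑ u ∈ C, ∑ v ∈ C, (if x i = v then p (v - u) * W i else 0)
                = ∑ u ∈ C, p (x i - u) * W i := by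
              refine Finset.sum_congr rfl fun u _ => ?_
              rw [Finset.sum_ite_eq, if_pos (hxC i)]
            rw [e2, ← Finset.sum_mul]
            exact mul_le_mul_of_nonneg_right (hsum_le2 (x i)) (hW0 i)
      _ = 2 * W i := by ring
  -- elementary inequality  exp t - 1 - t ≤ 2 (cosh t - 1)
  have hexp : ∀ t : ℝ, Real.exp t - 1 - t ≤ 2 * (Real.cosh t - 1) := by
    intro t
    have h := Real.add_one_le_exp (-t)
    rw [Real.cosh_eq]
    linarith
  -- main finite estimate
  have hmain : ∑ u ∈ C, ∑ v ∈ C, F u v ≤ psiExp θ x * (2 * (2 * ∑ i, W i)) := by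
    have h1 : ∑ u ∈ C, ∑ v ∈ C, F u v
        = psiExp θ x * ∑ u ∈ C, ∑ v ∈ C, (p (v - u) * D u v
            + p (v - u) * (Real.exp (D u v) - 1 - D u v)) := by
      rw [Finset.mul_sum]
      refine Finset.sum_congr rfl fun u _ => ?_
      rw [Finset.mul_sum]
      refine Finset.sum_congr rfl fun v _ => ?_
      rw [hFψ u v]; ring
    rw [h1]
    refine mul_le_mul_of_nonneg_left ?_ (le_of_lt hψpos)
    have h2 : ∑ u ∈ C, ∑ v ∈ C, (p (v - u) * D u v
          + p (v - u) * (Real.exp (D u v) - 1 - D u v))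
        = ∑ u ∈ C, ∑ v ∈ C, p (v - u) * (Real.exp (D u v) - 1 - D u v) := by
      calc ∑ u ∈ C, ∑ v ∈ C, (p (v - u) * D u v
              + p (v - u) * (Real.exp (D u v) - 1 - D u v))
          = (∑ u ∈ C, ∑ v ∈ C, p (v - u) * D u v)
            + ∑ u ∈ C, ∑ v ∈ C, p (v - u) * (Real.exp (D u v) - 1 - D u v) :=
            (Finset.sum_congr rfl fun u _ => Finset.sum_add_distrib).trans Finset.sum_add_distrib
        _ = _ := by rw [hlin, zero_add]
    rw [h2]
    calc ∑ u ∈ C, ∑ v ∈ C, p (v - u) * (Real.exp (D u v) - 1 - D u v)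
        ≤ ∑ u ∈ C, ∑ v ∈ C, 2 * (p (v - u) * (Real.cosh (D u v) - 1)) := by
          refine Finset.sum_le_sum fun u _ => Finset.sum_le_sum fun v _ => ?_
          calc p (v - u) * (Real.exp (D u v) - 1 - D u v)
              ≤ p (v - u) * (2 * (Real.cosh (D u v) - 1)) :=
                mul_le_mul_of_nonneg_left (hexp _) (hp0 _)
            _ = 2 * (p (v - u) * (Real.cosh (D u v) - 1)) := by ring
      _ = 2 * ∑ u ∈ C, ∑ v ∈ C, (p (v - u) * (Real.cosh (D u v) - 1)) := by
          rw [Finset.mul_sum]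
          refine Finset.sum_congr rfl fun u _ => by rw [Finset.mul_sum]
      _ ≤ 2 * ∑ u ∈ C, ∑ v ∈ C, ∑ i, (if x i = u ∨ x i = v then p (v - u) * W i else 0) := by
          refine mul_le_mul_of_nonneg_left ?_ (by norm_num)
          exact Finset.sum_le_sum fun u _ => Finset.sum_le_sum fun v _ => hcoshD u v
      _ ≤ 2 * (2 * ∑ i, W i) := mul_le_mul_of_nonneg_left hcount (by norm_num)
  -- conclusion
  rw [htsum]
  have hT : ∑ i, W i = ∑ j, ∑ i, (Real.cosh (a₀ * θ i j) - 1) := Finset.sum_comm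
  have hT0 : 0 ≤ ∑ i, W i := Finset.sum_nonneg fun i _ => hW0 i
  calc (1/2 : ℝ) * ∑ u ∈ C, ∑ v ∈ C, F u v
      ≤ (1/2) * (psiExp θ x * (2 * (2 * ∑ i, W i))) :=
        mul_le_mul_of_nonneg_left hmain (by norm_num)
    _ = psiExp θ x * (2 * ∑ i, W i) := by ring
    _ ≤ psiExp θ x * (a₀ * ∑ i, W i) :=
        mul_le_mul_of_nonneg_left (mul_le_mul_of_nonneg_right ha2 hT0) (le_of_lt hψpos)
    _ = psiExp θ x * (a₀ * ∑ j, ∑ i, (Real.cosh (a₀ * θ i j) - 1)) := by rw [hT]
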